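/- Let (X, ≤) be a countable lower 1-transitive linear order with at least two elements, and suppose every class of ∼fin is a singleton (equivalently, for all x < y in X the closed interval [x, y] is infinite). Then X is densely ordered with no least element, and X is order-isomorphic to ℚ or to ℚ̇ = ℚ ⊕ₗ PUnit (the rationals with a greatest element adjoined). -/

import Mathlib

/-- A linear order is lower 1-transitive if any two of its initial segments
are order-isomorphic. -/
def LowerOneTransitive (X : Type*) [LinearOrder X] : Prop :=
  ∀ a b : X, Nonempty (Set.Iic a ≃o Set.Iic b)

/-- A countable lower 1-transitive linear order with at least two elements in which
every closed interval between distinct points is infinite (all ∼fin classes are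
singletons) is densely ordered without least element, and is order-isomorphic to ℚ
or to ℚ̇ = ℚ ⊕ₗ PUnit. -/
theorem lowerOneTransitive_dense_case {X : Type*} [LinearOrder X] [Countable X]
    [Nontrivial X] (hX : LowerOneTransitive X)
    (h : ∀ x y : X, x < y → (Set.Icc x y).Infinite) :
    DenselyOrdered X ∧ NoMinOrder X ∧
      (Nonempty (X ≃o ℚ) ∨ Nonempty (X ≃o (ℚ ⊕ₗ PUnit))) := by
  have hdense : DenselyOrdered X := by
    constructor
    intro x y hxy
    by_contra hc
    push_neg at hc
    have hsub : Set.Icc x y ⊆ {x, y} := by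
      intro z hz
      rcases eq_or_lt_of_le hz.1 with h1 | h1
      · exact Or.inl h1.symm
      rcases eq_or_lt_of_le hz.2 with h2 | h2
      · exact Or.inr h2
      · exact absurd (hc z h1) (not_le_of_gt h2)
    exact (h x y hxy) ((Set.finite_singleton y).insert x |>.subset hsub)
  have hmin : NoMinOrder X := by
    constructor
    intro a
    by_contra hc
    push_neg at hc
    obtain ⟨b, hb⟩ := exists_ne a
    have hab : a < b := lt_of_le_of_ne (hc b) (Ne.symm hb)
    obtain ⟨e⟩ := hX b a
    have key : e ⟨a, hab.le⟩ = e ⟨b, le_rfl⟩ := by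
      apply Subtype.ext
      have h1 : (e ⟨a, hab.le⟩ : X) = a :=
        le_antisymm (e ⟨a, hab.le⟩).2 (hc _)
      have h2 : (e ⟨b, le_rfl⟩ : X) = a :=
        le_antisymm (e ⟨b, le_rfl⟩).2 (hc _)
      rw [h1, h2]
    have heq : (⟨a, hab.le⟩ : Set.Iic b) = ⟨b, le_rfl⟩ := e.injective key
    exact hb (congrArg Subtype.val heq).symm
  haveI := hdense
  haveI := hmin
  refine ⟨hdense, hmin, ?_⟩
  by_cases hmax : ∃ m : X, ∀ x, x ≤ m
  · obtain ⟨m, hm⟩ := hmax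
    right
    obtain ⟨b, hb⟩ := exists_ne m
    have hbm : b < m := lt_of_le_of_ne (hm b) hb
    haveI : Nonempty (Set.Iio m) := ⟨⟨b, hbm⟩⟩
    haveI : NoMinOrder (Set.Iio m) := by
      constructor
      rintro ⟨x, hx⟩
      obtain ⟨y, hy⟩ := exists_lt x
      exact ⟨⟨y, hy.trans hx⟩, hy⟩
    obtain ⟨g⟩ := Order.iso_of_countable_dense (Set.Iio m) ℚ
    set f : X → ℚ ⊕ₗ PUnit := fun x =>
      if hx : x < m then toLex (Sum.inl (g ⟨x, hx⟩)) else toLex (Sum.inr PUnit.unit)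
      with hf
    have hmono : StrictMono f := by
      intro x y hxy
      by_cases hy : y < m
      · have hx : x < m := hxy.trans hy
        simp only [hf, dif_pos hx, dif_pos hy]
        exact Sum.Lex.inl_lt_inl_iff.mpr (g.strictMono hxy)
      · have hx : x < m := lt_of_lt_of_le hxy (hm y)
        simp only [hf, dif_pos hx, dif_neg hy]
        exact Sum.Lex.inl_lt_inr _ _
    have hsurj : Function.Surjective f := by
      rintro (q | u)
      · refine ⟨(g.symm q : Set.Iio m), ?_⟩
        have hlt : ((g.symm q : Set.Iio m) : X) < m := (g.symm q).2
        simp only [hf, dif_pos hlt]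
        have hq : g ⟨(g.symm q : X), hlt⟩ = q := by
          exact g.apply_symm_apply q
        rw [hq]; rfl
      · refine ⟨m, ?_⟩
        simp [hf]
        rfl
    exact ⟨hmono.orderIsoOfSurjective f hsurj⟩
  · left
    push_neg at hmax
    haveI : NoMaxOrder X := ⟨fun a => by
      obtain ⟨x, hx⟩ := hmax a
      exact ⟨x, hx⟩⟩
    haveI : Nonempty X := ⟨Classical.arbitrary X⟩
    exact Order.iso_of_countable_dense X ℚ
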